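/- arXiv:1910.02415 — 4 statements merged into one kernel-verified Lean document; each statement's English description precedes it below -/
import Mathlib

section
/- If T is a tree on n vertices (n ≥ 2) and T is not isomorphic to the star S_n, then M_2(T) < M_2(S_n) = (n-1)^2. -/
open scoped Classical
noncomputable def M1 {V : Type*} [Fintype V] (G : SimpleGraph V) : ℕ :=
  ∑ v, G.degree v ^ 2
noncomputable def M2 {V : Type*} [Fintype V] (G : SimpleGraph V) : ℕ :=
  ∑ e ∈ G.edgeFinset,
    Sym2.lift ⟨fun u v => G.degree u * G.degree v, fun _ _ => Nat.mul_comm _ _⟩ e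
noncomputable def numEdges {V : Type*} [Fintype V] (G : SimpleGraph V) : ℕ :=
  G.edgeFinset.card
def IsKCyclic {V : Type*} [Fintype V] (k : ℕ) (G : SimpleGraph V) : Prop :=
  G.Connected ∧ G.edgeFinset.card + 1 = Fintype.card V + k
def starGraph (n : ℕ) : SimpleGraph (Fin n) :=
  { Adj := fun u v => u ≠ v ∧ (u.val = 0 ∨ v.val = 0)
    symm := by constructor; intro u v h; exact ⟨h.1.symm, h.2.symm⟩
    loopless := by constructor; intro u h; exact h.1 rfl }
def joinG {α β : Type*} (G : SimpleGraph α) (H : SimpleGraph β) : SimpleGraph (α ⊕ β) :=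
  { Adj := fun u v =>
      match u, v with
      | Sum.inl a, Sum.inl b => G.Adj a b
      | Sum.inr a, Sum.inr b => H.Adj a b
      | Sum.inl _, Sum.inr _ => True
      | Sum.inr _, Sum.inl _ => True
    symm := by
      constructor
      intro u v h
      cases u <;> cases v <;> simp_all [SimpleGraph.adj_comm]
    loopless := by
      constructor
      intro u h
      cases u <;> simp_all }
noncomputable def deleteS {V : Type*} [Fintype V] (G : SimpleGraph V) (S : Finset V) :
    SimpleGraph ↥((↑S : Set V)ᶜ) :=
  G.induce ((↑S : Set V)ᶜ)
def QuasiKCyclic {V : Type*} [Fintype V] (k p : ℕ) (G : SimpleGraph V) : Prop :=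
  G.Connected ∧
  (∃ S : Finset V, S.card = p ∧ IsKCyclic k (deleteS G S)) ∧
  ∀ S' : Finset V, IsKCyclic k (deleteS G S') → p ≤ S'.card
def Un3 (n : ℕ) : SimpleGraph (Fin n) :=
  { Adj := fun u v => u ≠ v ∧ (u.val = 0 ∨ v.val = 0 ∨ (u.val ≤ 2 ∧ v.val ≤ 2))
    symm := by constructor; intro u v h; tauto
    loopless := by constructor; intro u h; exact h.1 rfl }
def Bn33 (n : ℕ) : SimpleGraph (Fin n) :=
  { Adj := fun u v => u ≠ v ∧ (u.val = 0 ∨ v.val = 0 ∨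
      (1 ≤ u.val ∧ u.val ≤ 2 ∧ 1 ≤ v.val ∧ v.val ≤ 2) ∨
      (3 ≤ u.val ∧ u.val ≤ 4 ∧ 3 ≤ v.val ∧ v.val ≤ 4))
    symm := by constructor; intro u v h; tauto
    loopless := by constructor; intro u h; exact h.1 rfl }


section Aux
open Finset SimpleGraph
variable {V : Type*}


lemma no_tri {G : SimpleGraph V} (hG : G.IsAcyclic) {a b c : V}
    (hab : G.Adj a b) (hbc : G.Adj b c) (hac : G.Adj a c) : False := by
  have hb := (SimpleGraph.isAcyclic_iff_forall_edge_isBridge.mp hG) (e := s(a,b))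
      (by simpa using hab)
  rw [SimpleGraph.isBridge_iff] at hb
  refine hb ?_
  have h1 : (G \ SimpleGraph.fromEdgeSet {s(a,b)}).Adj a c := by
    rw [SimpleGraph.sdiff_adj]
    refine ⟨hac, ?_⟩
    simp only [SimpleGraph.fromEdgeSet_adj, Set.mem_singleton_iff]
    rintro ⟨h, -⟩
    rw [Sym2.eq_iff] at h
    rcases h with ⟨h1, h2⟩ | ⟨h1, h2⟩
    · exact hbc.ne h2.symm
    · exact hab.ne h1
  have h2 : (G \ SimpleGraph.fromEdgeSet {s(a,b)}).Adj c b := by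
    rw [SimpleGraph.sdiff_adj]
    refine ⟨hbc.symm, ?_⟩
    simp only [SimpleGraph.fromEdgeSet_adj, Set.mem_singleton_iff]
    rintro ⟨h, -⟩
    rw [Sym2.eq_iff] at h
    rcases h with ⟨h1, h2⟩ | ⟨h1, h2⟩
    · exact hac.ne h1.symm
    · exact hab.ne h2.symm
  exact h1.reachable.trans h2.reachable

lemma no_c4 {G : SimpleGraph V} (hG : G.IsAcyclic) {a b c d : V}
    (hab : G.Adj a b) (hbc : G.Adj b c) (hcd : G.Adj c d) (hda : G.Adj d a)
    (hac : a ≠ c) (hbd : b ≠ d) : False := by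
  have hb := (SimpleGraph.isAcyclic_iff_forall_edge_isBridge.mp hG) (e := s(a,b))
      (by simpa using hab)
  rw [SimpleGraph.isBridge_iff] at hb
  refine hb ?_
  have key : ∀ x y : V, G.Adj x y → (x ≠ a ∨ y ≠ b) → (x ≠ b ∨ y ≠ a) →
      (G \ SimpleGraph.fromEdgeSet {s(a,b)}).Adj x y := by
    intro x y hxy h1 h2
    rw [SimpleGraph.sdiff_adj]
    refine ⟨hxy, ?_⟩
    simp only [SimpleGraph.fromEdgeSet_adj, Set.mem_singleton_iff]
    rintro ⟨h, -⟩
    rw [Sym2.eq_iff] at h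
    rcases h with ⟨h1', h2'⟩ | ⟨h1', h2'⟩ <;> tauto
  have h1 : (G \ SimpleGraph.fromEdgeSet {s(a,b)}).Adj a d :=
    key a d hda.symm (Or.inr (fun h => hbd h.symm)) (Or.inl hab.ne)
  have h2 : (G \ SimpleGraph.fromEdgeSet {s(a,b)}).Adj d c :=
    key d c hcd.symm (Or.inl hda.ne) (Or.inl (fun h => hbd h.symm))
  have h3 : (G \ SimpleGraph.fromEdgeSet {s(a,b)}).Adj c b :=
    key c b hbc.symm (Or.inl hac.symm) (Or.inr hab.ne')
  exact (h1.reachable.trans (h2.reachable.trans h3.reachable))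

variable [Fintype V]

lemma star_deg_z {n : ℕ} (hn : 2 ≤ n) {z : Fin n} (hzv : z.val = 0) :
    (_root_.starGraph n).degree z = n - 1 := by
  rw [← SimpleGraph.card_neighborFinset_eq_degree]
  have : (_root_.starGraph n).neighborFinset z = Finset.univ.erase z := by
    ext u
    simp only [SimpleGraph.mem_neighborFinset, Finset.mem_erase, Finset.mem_univ, and_true]
    constructor
    · rintro ⟨h1, -⟩; exact fun h => h1 h.symm
    · intro h; exact ⟨fun h' => h h'.symm, Or.inl hzv⟩
  rw [this, Finset.card_erase_of_mem (Finset.mem_univ z), Finset.card_univ, Fintype.card_fin]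

lemma star_deg_v {n : ℕ} (hn : 2 ≤ n) {v : Fin n} (hv : v.val ≠ 0) {z : Fin n} (hzv : z.val = 0) :
    (_root_.starGraph n).degree v = 1 := by
  rw [← SimpleGraph.card_neighborFinset_eq_degree]
  have : (_root_.starGraph n).neighborFinset v = {z} := by
    ext u
    simp only [SimpleGraph.mem_neighborFinset, Finset.mem_singleton]
    constructor
    · rintro ⟨h1, h2 | h2⟩
      · exact absurd h2 hv
      · exact Fin.ext (h2.trans hzv.symm)
    · rintro rfl
      refine ⟨fun h => hv (by rw [h, hzv]), Or.inr hzv⟩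
  rw [this, Finset.card_singleton]

lemma star_edgeFinset {n : ℕ} (hn : 2 ≤ n) :
    (_root_.starGraph n).edgeFinset =
      Finset.image (fun v : Fin n => s((⟨0, by omega⟩ : Fin n), v)) (Finset.univ.erase ⟨0, by omega⟩) := by
  set z : Fin n := ⟨0, by omega⟩ with hz
  ext e
  induction e using Sym2.ind with
  | _ u v =>
    simp only [SimpleGraph.mem_edgeFinset, SimpleGraph.mem_edgeSet, Finset.mem_image,
      Finset.mem_erase, Finset.mem_univ, and_true]
    constructor
    · rintro ⟨h1, h2 | h2⟩
      · have : u = z := Fin.ext h2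
        subst this
        exact ⟨v, fun h => h1 h.symm, rfl⟩
      · have : v = z := Fin.ext h2
        subst this
        exact ⟨u, fun h => h1 h, Sym2.eq_swap⟩
    · rintro ⟨w, hw, h⟩
      rw [Sym2.eq_iff] at h
      rcases h with ⟨h1, h2⟩ | ⟨h1, h2⟩
      · subst h1; subst h2; exact ⟨fun h => hw h.symm, Or.inl rfl⟩
      · subst h1; subst h2; exact ⟨fun h => hw h, Or.inr rfl⟩

lemma M2_star {n : ℕ} (hn : 2 ≤ n) : M2 (_root_.starGraph n) = (n - 1) ^ 2 := by
  set z : Fin n := ⟨0, by omega⟩ with hz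
  rw [M2, star_edgeFinset hn]
  rw [Finset.sum_image (by
    intro a _ b _ h
    exact (Sym2.congr_right).mp h)]
  have : ∀ v ∈ Finset.univ.erase z,
      Sym2.lift ⟨fun u v => (_root_.starGraph n).degree u * (_root_.starGraph n).degree v,
        fun _ _ => Nat.mul_comm _ _⟩ s(z, v) = n - 1 := by
    intro v hv
    rw [Finset.mem_erase] at hv
    rw [Sym2.lift_mk]
    show (_root_.starGraph n).degree z * (_root_.starGraph n).degree v = n - 1
    have hvv : v.val ≠ 0 := fun h => hv.1 (Fin.ext h)
    rw [star_deg_z hn (z := z) rfl, star_deg_v hn hvv (z := z) rfl, Nat.mul_one]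
  rw [Finset.sum_congr rfl this, Finset.sum_const, Finset.card_erase_of_mem (Finset.mem_univ z),
    Finset.card_univ, Fintype.card_fin, smul_eq_mul, sq]

lemma dart_sum_eq_two_M2 (G : SimpleGraph V) :
    ∑ d : G.Dart, G.degree d.fst * G.degree d.snd = 2 * M2 G := by
  classical
  have hmaps : ∀ d : G.Dart, d ∈ (Finset.univ : Finset G.Dart) → d.edge ∈ G.edgeFinset := by
    intro d _
    rw [SimpleGraph.mem_edgeFinset]
    exact d.edge_mem
  rw [← Finset.sum_fiberwise_of_maps_to hmaps
    (fun d : G.Dart => G.degree d.fst * G.degree d.snd)]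
  rw [M2, Finset.mul_sum]
  refine Finset.sum_congr rfl ?_
  intro e he
  induction e using Sym2.ind with
  | _ u v =>
    have hadj : G.Adj u v := by rwa [SimpleGraph.mem_edgeFinset, SimpleGraph.mem_edgeSet] at he
    have hval : ∀ d ∈ ({d : G.Dart | d.edge = s(u,v)} : Finset _),
        G.degree d.fst * G.degree d.snd = G.degree u * G.degree v := by
      intro d hd
      simp only [Finset.mem_filter] at hd
      have := hd.2
      rw [SimpleGraph.dart_edge_eq_mk'_iff] at this
      rcases this with h | h
      · rw [show d.fst = u from congrArg Prod.fst h, show d.snd = v from congrArg Prod.snd h]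
      · rw [show d.fst = v from congrArg Prod.fst h, show d.snd = u from congrArg Prod.snd h,
          Nat.mul_comm]
    rw [Finset.sum_congr rfl hval, Finset.sum_const, smul_eq_mul]
    have hcard : #({d : G.Dart | d.edge = s(u,v)} : Finset _) = 2 :=
      G.dart_edge_fiber_card _ hadj
    rw [hcard, Sym2.lift_mk]

lemma dart_sum_eq_vertex_sum (G : SimpleGraph V) :
    ∑ d : G.Dart, G.degree d.fst * G.degree d.snd
      = ∑ v, G.degree v * ∑ u ∈ G.neighborFinset v, G.degree u := by
  classical
  rw [← Finset.sum_fiberwise (Finset.univ : Finset G.Dart) (fun d => d.fst)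
    (fun d : G.Dart => G.degree d.fst * G.degree d.snd)]
  refine Finset.sum_congr rfl ?_
  intro v _
  rw [Finset.mul_sum]
  refine Finset.sum_bij (fun (d : G.Dart) _ => d.snd) ?_ ?_ ?_ ?_
  · intro d hd
    simp only [Finset.mem_filter] at hd
    rw [SimpleGraph.mem_neighborFinset]
    exact hd.2 ▸ d.adj
  · intro d1 h1 d2 h2 h
    simp only [Finset.mem_filter] at h1 h2
    exact SimpleGraph.Dart.ext d1 d2 (Prod.ext (h1.2.trans h2.2.symm) h)
  · intro u hu
    rw [SimpleGraph.mem_neighborFinset] at hu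
    exact ⟨⟨(v, u), hu⟩, by simp, rfl⟩
  · intro d hd
    simp only [Finset.mem_filter] at hd
    rw [hd.2]


lemma nbr_deg_sum_eq (G : SimpleGraph V)
    (htri : ∀ a b c : V, G.Adj a b → G.Adj b c → G.Adj a c → False) (v : V) :
    ∑ u ∈ G.neighborFinset v, G.degree u
      = #((G.neighborFinset v).biUnion (fun u => G.incidenceFinset u)) := by
  classical
  rw [Finset.card_biUnion]
  · exact (Finset.sum_congr rfl (fun u _ => (G.card_incidenceFinset_eq_degree u).symm))
  · intro x hx y hy hxy
    rw [Finset.mem_coe, SimpleGraph.mem_neighborFinset] at hx hy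
    rw [Function.onFun, Finset.disjoint_left]
    intro e hex hey
    rw [SimpleGraph.mem_incidenceFinset] at hex hey
    have := G.incidenceSet_inter_incidenceSet_subset hxy ⟨hex, hey⟩
    rw [Set.mem_singleton_iff] at this
    have hadj : G.Adj x y := by
      rw [← SimpleGraph.mem_edgeSet, ← this]
      exact hex.1
    exact htri x v y hx.symm hy hadj

lemma incidence_biUnion_subset (G : SimpleGraph V) (s : Finset V) :
    s.biUnion (fun u => G.incidenceFinset u) ⊆ G.edgeFinset := by
  classical
  intro e he
  rw [Finset.mem_biUnion] at he
  obtain ⟨u, -, he⟩ := he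
  rw [SimpleGraph.mem_incidenceFinset] at he
  rw [SimpleGraph.mem_edgeFinset]
  exact he.1

lemma star_iso {n : ℕ} (hn : 2 ≤ n) (hcard : Fintype.card V = n)
    (T : SimpleGraph V) (hconn : T.Connected) (v₀ : V)
    (hstar : ∀ u w : V, T.Adj u w → u = v₀ ∨ w = v₀) :
    Nonempty (T ≃g _root_.starGraph n) := by
  have hadj0 : ∀ u : V, u ≠ v₀ → T.Adj u v₀ := by
    intro u hu
    obtain ⟨p⟩ := hconn.preconnected u v₀
    cases p with
    | nil => exact absurd rfl hu
    | cons h p =>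
      rcases hstar _ _ h with h' | h'
      · exact absurd h' hu
      · exact h' ▸ h
  have hchar : ∀ u w : V, T.Adj u w ↔ u ≠ w ∧ (u = v₀ ∨ w = v₀) := by
    intro u w
    constructor
    · intro h
      exact ⟨h.ne, hstar u w h⟩
    · rintro ⟨h1, rfl | rfl⟩
      · exact (hadj0 w (fun h => h1 h.symm)).symm
      · exact hadj0 u h1
  set z : Fin n := ⟨0, by omega⟩ with hz
  let e : V ≃ Fin n := Fintype.equivFinOfCardEq hcard
  let e' : V ≃ Fin n := e.trans (Equiv.swap (e v₀) z)
  have he'v₀ : e' v₀ = z := by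
    simp [e', Equiv.swap_apply_left]
  have hzero : ∀ x : V, (e' x).val = 0 ↔ x = v₀ := by
    intro x
    constructor
    · intro h
      have : e' x = z := Fin.ext h
      have := this.trans he'v₀.symm
      exact e'.injective this
    · rintro rfl
      rw [he'v₀]
  refine ⟨⟨e', ?_⟩⟩
  intro u w
  show (e' u ≠ e' w ∧ ((e' u).val = 0 ∨ (e' w).val = 0)) ↔ T.Adj u w
  rw [hchar u w, hzero, hzero, ne_eq, EmbeddingLike.apply_eq_iff_eq, ← ne_eq]


lemma exists_center (T : SimpleGraph V) (hconn : T.Connected)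
    (htri : ∀ a b c : V, T.Adj a b → T.Adj b c → T.Adj a c → False)
    (hcard2 : 2 ≤ Fintype.card V)
    (hno : ∀ a b c d : V, T.Adj a b → T.Adj c d → a = c ∨ a = d ∨ b = c ∨ b = d) :
    ∃ v₀ : V, ∀ u w : V, T.Adj u w → u = v₀ ∨ w = v₀ := by
  obtain ⟨x, y, hxy⟩ := Fintype.exists_pair_of_one_lt_card (α := V) (by omega)
  obtain ⟨p⟩ := hconn.preconnected x y
  have hedge : ∃ a b : V, T.Adj a b := by
    cases p with
    | nil => exact absurd rfl hxy
    | cons h _ => exact ⟨_, _, h⟩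
  obtain ⟨a, b, hab⟩ := hedge
  by_cases hA : ∀ u w : V, T.Adj u w → u = a ∨ w = a
  · exact ⟨a, hA⟩
  push_neg at hA
  obtain ⟨u, w, huw, hua, hwa⟩ := hA
  have hbc : ∃ c : V, T.Adj b c ∧ c ≠ a := by
    rcases hno a b u w hab huw with h | h | h | h
    · exact absurd h.symm hua
    · exact absurd h.symm hwa
    · exact ⟨w, h ▸ huw, hwa⟩
    · exact ⟨u, (h ▸ huw.symm), hua⟩
  obtain ⟨c, hbcadj, hca⟩ := hbc
  refine ⟨b, ?_⟩
  intro p q hpq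
  by_contra hcon
  push_neg at hcon
  obtain ⟨hpb, hqb⟩ := hcon
  have h1 : p = a ∨ q = a := by
    rcases hno a b p q hab hpq with h | h | h | h
    · exact Or.inl h.symm
    · exact Or.inr h.symm
    · exact absurd h.symm hpb
    · exact absurd h.symm hqb
  have h2 : p = c ∨ q = c := by
    rcases hno b c p q hbcadj hpq with h | h | h | h
    · exact absurd h.symm hpb
    · exact absurd h.symm hqb
    · exact Or.inl h.symm
    · exact Or.inr h.symm
  rcases h1 with rfl | rfl <;> rcases h2 with h2 | h2
  · exact hca h2.symm
  · exact htri _ b _ hab hbcadj (by rw [← h2]; exact hpq)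
  · exact htri _ b _ hab hbcadj (by rw [← h2]; exact hpq.symm)
  · exact hca h2.symm

end Aux

theorem stmt2 {V : Type*} [Fintype V] {n : ℕ} (hn : 2 ≤ n) (hcard : Fintype.card V = n)
    (T : SimpleGraph V) (hT : T.IsTree) (hiso : ¬ Nonempty (T ≃g starGraph n)) :
    M2 T < M2 (starGraph n) ∧ M2 (starGraph n) = (n - 1) ^ 2 := by
  classical
  have hstar : M2 (starGraph n) = (n - 1) ^ 2 := M2_star hn
  refine ⟨?_, hstar⟩
  rw [hstar]
  have htri : ∀ a b c : V, T.Adj a b → T.Adj b c → T.Adj a c → False :=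
    fun a b c h1 h2 h3 => no_tri hT.2 h1 h2 h3
  have hcard2 : 2 ≤ Fintype.card V := hcard ▸ hn
  -- dichotomy
  by_cases hno : ∀ a b c d : V, T.Adj a b → T.Adj c d → a = c ∨ a = d ∨ b = c ∨ b = d
  · obtain ⟨v₀, hv₀⟩ := exists_center T hT.1 htri hcard2 hno
    exact absurd (star_iso hn hcard T hT.1 v₀ hv₀) hiso
  push_neg at hno
  obtain ⟨a, b, c, d, hab, hcd, hac, had, hbc, hbd⟩ := hno
  -- find x ∈ {a, b} not adjacent to c nor d
  have key : ∃ x : V, 0 < T.degree x ∧ ¬T.Adj x c ∧ ¬T.Adj x d := by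
    by_cases h1 : T.Adj a c ∨ T.Adj a d
    · refine ⟨b, (T.degree_pos_iff_exists_adj _).mpr ⟨a, hab.symm⟩, ?_, ?_⟩
      · intro hbc'
        rcases h1 with h | h
        · exact htri a b c hab hbc' h
        · exact no_c4 hT.2 hab hbc' hcd h.symm hac hbd
      · intro hbd'
        rcases h1 with h | h
        · exact no_c4 hT.2 hab hbd' hcd.symm h.symm had hbc
        · exact htri a b d hab hbd' h
    · push_neg at h1
      exact ⟨a, (T.degree_pos_iff_exists_adj _).mpr ⟨b, hab⟩, h1.1, h1.2⟩
  obtain ⟨x, hxdeg, hxc, hxd⟩ := key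
  have hm : T.edgeFinset.card = n - 1 := by
    have := hT.card_edgeFinset
    omega
  have hcdE : s(c, d) ∈ T.edgeFinset := by
    rw [SimpleGraph.mem_edgeFinset, SimpleGraph.mem_edgeSet]; exact hcd
  -- bounds on neighbor degree sums
  have hSle : ∀ v : V, ∑ u ∈ T.neighborFinset v, T.degree u ≤ n - 1 := by
    intro v
    rw [nbr_deg_sum_eq T htri v, ← hm]
    exact Finset.card_le_card (incidence_biUnion_subset T _)
  have hSx : ∑ u ∈ T.neighborFinset x, T.degree u ≤ n - 2 := by
    rw [nbr_deg_sum_eq T htri x]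
    have hsub : (T.neighborFinset x).biUnion (fun u => T.incidenceFinset u)
        ⊆ T.edgeFinset.erase s(c, d) := by
      intro e he
      have heE := incidence_biUnion_subset T _ he
      rw [Finset.mem_erase]
      refine ⟨?_, heE⟩
      rintro rfl
      rw [Finset.mem_biUnion] at he
      obtain ⟨u, hu, heu⟩ := he
      rw [SimpleGraph.mem_neighborFinset] at hu
      rw [SimpleGraph.mem_incidenceFinset] at heu
      have hmem : u ∈ s(c, d) := heu.2
      rw [Sym2.mem_iff] at hmem
      rcases hmem with rfl | rfl
      · exact hxc hu
      · exact hxd hu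
    calc ((T.neighborFinset x).biUnion (fun u => T.incidenceFinset u)).card
        ≤ (T.edgeFinset.erase s(c, d)).card := Finset.card_le_card hsub
      _ = n - 2 := by rw [Finset.card_erase_of_mem hcdE, hm]; omega
  -- main computation
  have hkey : 2 * M2 T = ∑ v, T.degree v * ∑ u ∈ T.neighborFinset v, T.degree u := by
    rw [← dart_sum_eq_two_M2, dart_sum_eq_vertex_sum]
  have hdegsum : ∑ v, T.degree v = 2 * (n - 1) := by
    rw [T.sum_degrees_eq_twice_card_edges, hm]
  have hsplit : T.degree x * (∑ u ∈ T.neighborFinset x, T.degree u)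
      + ∑ v ∈ Finset.univ.erase x, T.degree v * ∑ u ∈ T.neighborFinset v, T.degree u
      = ∑ v, T.degree v * ∑ u ∈ T.neighborFinset v, T.degree u :=
    Finset.add_sum_erase Finset.univ
      (fun v => T.degree v * ∑ u ∈ T.neighborFinset v, T.degree u) (Finset.mem_univ x)
  have hrest : ∑ v ∈ Finset.univ.erase x, T.degree v * ∑ u ∈ T.neighborFinset v, T.degree u
      ≤ (∑ v ∈ Finset.univ.erase x, T.degree v) * (n - 1) := by
    rw [Finset.sum_mul]
    exact Finset.sum_le_sum (fun v _ => Nat.mul_le_mul_left _ (hSle v))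
  have hdegsplit : T.degree x + ∑ v ∈ Finset.univ.erase x, T.degree v = 2 * (n - 1) := by
    rw [Finset.add_sum_erase Finset.univ (fun v => T.degree v) (Finset.mem_univ x), hdegsum]
  have hxterm : T.degree x * (∑ u ∈ T.neighborFinset x, T.degree u)
      ≤ T.degree x * (n - 2) := Nat.mul_le_mul_left _ hSx
  have hfin : 2 * M2 T < 2 * (n - 1) ^ 2 := by
    rw [hkey, ← hsplit]
    have h1 : T.degree x * (n - 2) < T.degree x * (n - 1) :=
      (Nat.mul_lt_mul_left hxdeg).mpr (by omega)
    calc T.degree x * (∑ u ∈ T.neighborFinset x, T.degree u)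
          + ∑ v ∈ Finset.univ.erase x, T.degree v * ∑ u ∈ T.neighborFinset v, T.degree u
        ≤ T.degree x * (n - 2) + (∑ v ∈ Finset.univ.erase x, T.degree v) * (n - 1) :=
          Nat.add_le_add hxterm hrest
      _ < T.degree x * (n - 1) + (∑ v ∈ Finset.univ.erase x, T.degree v) * (n - 1) := by
          omega
      _ = 2 * (n - 1) ^ 2 := by
          rw [← Nat.add_mul, hdegsplit, sq]; ring
  omega
end

section
/- Let G be a connected simple graph on n vertices, S ⊆ V(G) with |S| = p, and suppose G − S is a k-cyclic graph on n − p vertices (i.e., |E(G−S)| = (n−p) − 1 + k). Then M_1(G) ≤ M_1(G−S) + p(4k + n^2 + 2n + p(n−4) − p^2 − 3), with equality if and only if every vertex of S is adjacent to all other n−1 vertices of G. -/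
open scoped Classical
section aux
variable {V : Type*} [Fintype V]

lemma deg_deleteS (G : SimpleGraph V) (S : Finset V) {v : V} (hv : v ∈ ((↑S : Set V)ᶜ)) :
    (deleteS G S).degree ⟨v, hv⟩ = (G.neighborFinset v \ S).card := by
  classical
  have himg : ((deleteS G S).neighborFinset ⟨v, hv⟩).image (Subtype.val)
      = G.neighborFinset v \ S := by
    ext u
    simp only [Finset.mem_image, SimpleGraph.mem_neighborFinset, Finset.mem_sdiff, deleteS,
      SimpleGraph.comap_adj, Function.Embedding.coe_subtype]
    constructor
    · rintro ⟨w, hadj, rfl⟩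
      exact ⟨(SimpleGraph.mem_neighborFinset (G.induce ((↑S : Set V)ᶜ)) ⟨v, hv⟩ w).mp hadj, fun hmem => w.2 (Finset.mem_coe.mpr hmem)⟩
    · rintro ⟨h1, h2⟩
      exact ⟨⟨u, fun hmem => h2 (Finset.mem_coe.mp hmem)⟩, (SimpleGraph.mem_neighborFinset _ _ _).mpr h1, rfl⟩
  rw [SimpleGraph.degree, ← himg, Finset.card_image_of_injective _ Subtype.val_injective]

lemma deg_split (G : SimpleGraph V) (S : Finset V) (v : V) :
    G.degree v = (G.neighborFinset v \ S).card + (S.filter (fun u => G.Adj v u)).card := by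
  classical
  have h1 : G.neighborFinset v ∩ S = S.filter (fun u => G.Adj v u) := by
    ext u; simp [SimpleGraph.mem_neighborFinset, and_comm]
  rw [← h1, SimpleGraph.degree, add_comm, Finset.card_inter_add_card_sdiff]

lemma adj_of_degree_eq (G : SimpleGraph V) {u w : V}
    (h : G.degree u = Fintype.card V - 1) (hne : w ≠ u) : G.Adj u w := by
  classical
  have hsub : G.neighborFinset u ⊆ Finset.univ.erase u := by
    intro x hx
    exact Finset.mem_erase.mpr ⟨(G.ne_of_adj ((SimpleGraph.mem_neighborFinset G u x).mp hx)).symm,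
      Finset.mem_univ x⟩
  have hcard : (Finset.univ.erase u).card = Fintype.card V - 1 := by
    simp [Finset.card_erase_of_mem]
  have heq : G.neighborFinset u = Finset.univ.erase u :=
    Finset.eq_of_subset_of_card_le hsub (by rw [hcard, ← h]; exact le_rfl)
  have hw : w ∈ G.neighborFinset u := by
    rw [heq]; exact Finset.mem_erase.mpr ⟨hne, Finset.mem_univ w⟩
  exact (SimpleGraph.mem_neighborFinset G u w).mp hw

end aux

theorem stmt8 {V : Type*} [Fintype V] {n p k : ℕ} (G : SimpleGraph V)
    (hcard : Fintype.card V = n) (hconn : G.Connected) (S : Finset V) (hS : S.card = p)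
    (hk : IsKCyclic k (deleteS G S)) :
    (M1 G : ℤ) ≤ (M1 (deleteS G S) : ℤ)
        + p * (4 * k + (n : ℤ) ^ 2 + 2 * n + p * ((n : ℤ) - 4) - (p : ℤ) ^ 2 - 3) ∧
    ((M1 G : ℤ) = (M1 (deleteS G S) : ℤ)
        + p * (4 * k + (n : ℤ) ^ 2 + 2 * n + p * ((n : ℤ) - 4) - (p : ℤ) ^ 2 - 3) ↔
      ∀ v ∈ S, G.degree v = n - 1) := by
  classical
  subst hcard
  subst hS
  have hV : Nonempty V := hconn.nonempty
  have hn1 : 1 ≤ Fintype.card V := Fintype.card_pos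
  set nZ : ℤ := (Fintype.card V : ℤ) with hnZ
  set pZ : ℤ := (S.card : ℤ) with hpZ
  set kZ : ℤ := (k : ℤ) with hkZ
  set d' : V → ℤ := fun v => ((G.neighborFinset v \ S).card : ℤ) with hd'
  set a : V → ℤ := fun v => ((S.filter (fun u => G.Adj v u)).card : ℤ) with ha
  set f : V → ℤ := fun v => (G.degree v : ℤ) ^ 2 with hf
  set g : V → ℤ := fun v => if v ∈ S then (nZ - 1) ^ 2 else (d' v + pZ) ^ 2 with hg
  have haP : ∀ v, a v ≤ pZ := fun v =>
    Int.ofNat_le.mpr (Finset.card_le_card (Finset.filter_subset _ _))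
  have haNN : ∀ v, 0 ≤ a v := fun v => Int.ofNat_nonneg _
  have hd'NN : ∀ v, 0 ≤ d' v := fun v => Int.ofNat_nonneg _
  have hdsplit : ∀ v, (G.degree v : ℤ) = d' v + a v := fun v => by
    simp only [hd', ha]
    exact_mod_cast deg_split G S v
  have hdeglt : ∀ v, (G.degree v : ℤ) ≤ nZ - 1 := by
    intro v
    have := G.degree_lt_card_verts v
    omega
  -- key pointwise bound
  have key : ∀ v ∈ Finset.univ, f v ≤ g v := by
    intro v _
    by_cases hv : v ∈ S
    · simp only [hg, hf, if_pos hv]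
      have h0 : (0:ℤ) ≤ (G.degree v : ℤ) := Int.ofNat_nonneg _
      nlinarith [hdeglt v]
    · simp only [hg, hf, if_neg hv, hdsplit v]
      nlinarith [haP v, haNN v, hd'NN v]
  have hfsum : (M1 G : ℤ) = ∑ v, f v := by
    simp [M1, hf]
  -- subtype sums
  have hcompl : ∀ x, x ∈ Sᶜ ↔ x ∈ ((↑S : Set V)ᶜ) := by
    intro x; simp
  have hM1' : (M1 (deleteS G S) : ℤ) = ∑ v ∈ Sᶜ, (d' v) ^ 2 := by
    have h1 : ∑ v ∈ Sᶜ, ((G.neighborFinset v \ S).card ^ 2) =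
        ∑ w : ↥((↑S : Set V)ᶜ), ((G.neighborFinset ↑w \ S).card ^ 2) :=
      Finset.sum_subtype _ hcompl _
    have h2 : ∀ w : ↥((↑S : Set V)ᶜ), (deleteS G S).degree w ^ 2 =
        (G.neighborFinset ↑w \ S).card ^ 2 := by
      intro w
      rw [show w = ⟨↑w, w.2⟩ from rfl, deg_deleteS G S w.2]
    have hNat : M1 (deleteS G S) = ∑ v ∈ Sᶜ, (G.neighborFinset v \ S).card ^ 2 := by
      rw [M1, Finset.sum_congr rfl (fun w _ => h2 w), ← h1]
    rw [hNat]
    simp only [hd']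
    push_cast
    rfl
  have hE : ∑ v ∈ Sᶜ, d' v = 2 * ((nZ - pZ) + kZ - 1) := by
    have h1 : ∑ v ∈ Sᶜ, (G.neighborFinset v \ S).card =
        ∑ w : ↥((↑S : Set V)ᶜ), (G.neighborFinset ↑w \ S).card :=
      Finset.sum_subtype _ hcompl _
    have h2 : ∑ w : ↥((↑S : Set V)ᶜ), (deleteS G S).degree w =
        2 * (deleteS G S).edgeFinset.card := SimpleGraph.sum_degrees_eq_twice_card_edges _
    have h3 : ∀ w : ↥((↑S : Set V)ᶜ), (deleteS G S).degree w =
        (G.neighborFinset ↑w \ S).card := by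
      intro w
      rw [show w = ⟨↑w, w.2⟩ from rfl, deg_deleteS G S w.2]
    rw [Finset.sum_congr rfl (fun w _ => h3 w)] at h2
    have h4 : ∑ v ∈ Sᶜ, (G.neighborFinset v \ S).card
        = 2 * (deleteS G S).edgeFinset.card := by rw [h1, ← h2]
    have hcs : Fintype.card ↥((↑S : Set V)ᶜ) = Fintype.card V - S.card := by
      rw [Fintype.card_compl_set]
      simp
    have hedge := hk.2
    rw [hcs] at hedge
    have hple : S.card ≤ Fintype.card V := Finset.card_le_univ S
    have h5 : ∑ v ∈ Sᶜ, d' v = ((∑ v ∈ Sᶜ, (G.neighborFinset v \ S).card : ℕ) : ℤ) := by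
      simp only [hd']
      push_cast
      rfl
    rw [h5, h4]
    omega
  have hcardSc : (Sᶜ.card : ℤ) = nZ - pZ := by
    have := Finset.card_compl S
    have hple : S.card ≤ Fintype.card V := Finset.card_le_univ S
    omega
  -- sum of g
  have hgsum : ∑ v, g v = (M1 (deleteS G S) : ℤ)
      + pZ * (4 * kZ + nZ ^ 2 + 2 * nZ + pZ * (nZ - 4) - pZ ^ 2 - 3) := by
    have hsplit : ∑ v ∈ S, g v + ∑ v ∈ Sᶜ, g v = ∑ v, g v :=
      Finset.sum_add_sum_compl S g
    have hgS : ∑ v ∈ S, g v = pZ * (nZ - 1) ^ 2 := by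
      rw [Finset.sum_congr rfl (fun v hv => if_pos hv)]
      rw [Finset.sum_const, nsmul_eq_mul]
    have hgSc : ∑ v ∈ Sᶜ, g v = (∑ v ∈ Sᶜ, (d' v) ^ 2) + 2 * pZ * (∑ v ∈ Sᶜ, d' v)
        + (Sᶜ.card : ℤ) * pZ ^ 2 := by
      rw [Finset.sum_congr rfl (fun v hv => if_neg (Finset.mem_compl.mp hv))]
      rw [Finset.sum_congr rfl (fun v (_ : v ∈ Sᶜ) => show (d' v + pZ)^2
        = (d' v)^2 + (2 * pZ * d' v + pZ ^ 2) by ring)]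
      rw [Finset.sum_add_distrib, Finset.sum_add_distrib, ← Finset.mul_sum,
        Finset.sum_const, nsmul_eq_mul]
      ring
    rw [← hsplit, hgS, hgSc, hE, hcardSc, hM1']
    ring
  constructor
  · rw [hfsum, ← hgsum]
    exact Finset.sum_le_sum key
  · rw [hfsum, ← hgsum]
    rw [Finset.sum_eq_sum_iff_of_le key]
    constructor
    · intro hall v hv
      have := hall v (Finset.mem_univ v)
      simp only [hf, hg, if_pos hv] at this
      have h0 : (0:ℤ) ≤ (G.degree v : ℤ) := Int.ofNat_nonneg _
      have h1 : (G.degree v : ℤ) = nZ - 1 := by nlinarith [hdeglt v]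
      omega
    · intro hdeg v _
      by_cases hv : v ∈ S
      · simp only [hf, hg, if_pos hv]
        have h1 : (G.degree v : ℤ) = nZ - 1 := by
          have := hdeg v hv
          omega
        rw [h1]
      · simp only [hf, hg, if_neg hv, hdsplit v]
        have hfil : S.filter (fun u => G.Adj v u) = S := by
          apply Finset.filter_true_of_mem
          intro u hu
          exact (adj_of_degree_eq G (hdeg u hu) (fun h => hv (by rw [h]; exact hu))).symm
        have : a v = pZ := by rw [ha]; simp [hfil, hpZ]
        rw [this]
end

section
/- Let H be a graph on n−p vertices maximizing M_1 among all k-cyclic graphs on n−p vertices. Then among all connected graphs G on n vertices admitting a p-element vertex subset S with G − S k-cyclic, the maximum of M_1(G) equals M_1(H) + p(4k + n^2 + 2n + p(n−4) − p^2 − 3), attained by G = H + K_p. -/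
open scoped Classical
section Aux
variable {V W : Type*} [Fintype V] [Fintype W]

lemma degree_iso {G : SimpleGraph V} {G' : SimpleGraph W} (e : G ≃g G') (v : V) :
    G.degree v = G'.degree (e v) := by
  rw [← SimpleGraph.card_neighborSet_eq_degree, ← SimpleGraph.card_neighborSet_eq_degree]
  exact Fintype.card_congr (e.mapNeighborSet v)

set_option maxHeartbeats 1000000 in
lemma M1_iso {G : SimpleGraph V} {G' : SimpleGraph W} (e : G ≃g G') : M1 G = M1 G' := by
  unfold M1
  calc ∑ v, G.degree v ^ 2 = ∑ v, G'.degree (e v) ^ 2 := by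
        exact Finset.sum_congr rfl fun v _ => by rw [degree_iso e v]
    _ = ∑ w, G'.degree w ^ 2 := Fintype.sum_equiv e.toEquiv _ _ fun v => rfl

lemma card_edges_iso {G : SimpleGraph V} {G' : SimpleGraph W} (e : G ≃g G') :
    G.edgeFinset.card = G'.edgeFinset.card := by
  rw [SimpleGraph.edgeFinset, SimpleGraph.edgeFinset, Set.toFinset_card, Set.toFinset_card]
  exact Fintype.card_congr e.mapEdgeSet

lemma degree_le_del [DecidableEq V] (G : SimpleGraph V) (S : Finset V) (x : ↥((↑S : Set V)ᶜ)) :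
    G.degree ↑x ≤ (deleteS G S).degree x + S.card := by
  rw [← SimpleGraph.card_neighborFinset_eq_degree, ← SimpleGraph.card_neighborFinset_eq_degree]
  have hsub : G.neighborFinset ↑x ⊆
      ((deleteS G S).neighborFinset x).map ⟨Subtype.val, Subtype.val_injective⟩ ∪ S := by
    intro u hu
    rw [SimpleGraph.mem_neighborFinset] at hu
    by_cases huS : u ∈ S
    · exact Finset.mem_union_right _ huS
    · refine Finset.mem_union_left _ ?_
      simp only [Finset.mem_map, SimpleGraph.mem_neighborFinset, Function.Embedding.coeFn_mk]
      exact ⟨⟨u, by simpa using huS⟩, hu, rfl⟩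
  calc (G.neighborFinset ↑x).card ≤ _ := Finset.card_le_card hsub
    _ ≤ _ + _ := Finset.card_union_le _ _
    _ = _ := by rw [Finset.card_map]
end Aux

set_option maxHeartbeats 2000000 in
theorem stmt10 {m p k : ℕ} (n : ℕ) (hn : n = m + p)
    (H : SimpleGraph (Fin m)) (hH : IsKCyclic k H)
    (hmax : ∀ H' : SimpleGraph (Fin m), IsKCyclic k H' → M1 H' ≤ M1 H) :
    (∀ G : SimpleGraph (Fin n), G.Connected →
      (∃ S : Finset (Fin n), S.card = p ∧ IsKCyclic k (deleteS G S)) →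
      (M1 G : ℤ) ≤ (M1 H : ℤ)
        + p * (4 * k + (n : ℤ) ^ 2 + 2 * n + p * ((n : ℤ) - 4) - (p : ℤ) ^ 2 - 3)) ∧
    (M1 (joinG H (SimpleGraph.completeGraph (Fin p))) : ℤ) = (M1 H : ℤ)
        + p * (4 * k + (n : ℤ) ^ 2 + 2 * n + p * ((n : ℤ) - 4) - (p : ℤ) ^ 2 - 3) := by
  subst hn
  have hm1 : 1 ≤ m := by
    obtain ⟨x⟩ := hH.1.nonempty
    exact x.pos
  have hEH : (H.edgeFinset.card : ℤ) = (m : ℤ) + k - 1 := by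
    have h2 := hH.2
    rw [Fintype.card_fin] at h2
    omega
  have hDH : (∑ v, (H.degree v : ℤ)) = 2 * ((m : ℤ) + k) - 2 := by
    have := H.sum_degrees_eq_twice_card_edges
    have hc : ((∑ v, H.degree v : ℕ) : ℤ) = 2 * (H.edgeFinset.card : ℤ) := by
      exact_mod_cast congrArg (Nat.cast : ℕ → ℤ) this
    push_cast at hc
    rw [hc, hEH]; ring
  constructor
  · rintro G hGconn ⟨S, hScard, hSk⟩
    -- transfer deleteS G S to a graph on Fin m
    have hcardc : Fintype.card ↥((↑S : Set (Fin (m + p)))ᶜ) = m := by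
      rw [Fintype.card_compl_set]
      simp [hScard]
    let e0 : ↥((↑S : Set (Fin (m + p)))ᶜ) ≃ Fin m := Fintype.equivFinOfCardEq hcardc
    let e2 : (deleteS G S).comap e0.symm.toEmbedding ≃g deleteS G S := SimpleGraph.Iso.comap e0.symm (deleteS G S)
    have hKC : IsKCyclic k ((deleteS G S).comap e0.symm.toEmbedding) := by
      refine ⟨e2.connected_iff.mpr hSk.1, ?_⟩
      rw [card_edges_iso e2, Fintype.card_fin]
      have := hSk.2
      rw [hcardc] at this
      exact this
    have hM1le : M1 (deleteS G S) ≤ M1 H := by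
      rw [← M1_iso e2]
      exact hmax _ hKC
    have hE' : ((deleteS G S).edgeFinset.card : ℤ) = (m : ℤ) + k - 1 := by
      have := hSk.2
      rw [hcardc] at this
      omega
    have hD' : (∑ x, ((deleteS G S).degree x : ℤ)) = 2 * ((m : ℤ) + k) - 2 := by
      have := (deleteS G S).sum_degrees_eq_twice_card_edges
      have hc : ((∑ x, (deleteS G S).degree x : ℕ) : ℤ) = 2 * ((deleteS G S).edgeFinset.card : ℤ) := by
        exact_mod_cast congrArg (Nat.cast : ℕ → ℤ) this
      push_cast at hc
      rw [hc, hE']; ring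
    -- split the sum
    have hsplit : M1 G = (∑ v ∈ S, G.degree v ^ 2) + ∑ v ∈ Sᶜ, G.degree v ^ 2 := by
      rw [M1, ← Finset.sum_add_sum_compl S]
    have hA : (∑ v ∈ S, G.degree v ^ 2) ≤ p * (m + p - 1) ^ 2 := by
      calc (∑ v ∈ S, G.degree v ^ 2) ≤ S.card * (m + p - 1) ^ 2 := by
            apply Finset.sum_le_card_nsmul
            intro v _
            have := G.degree_lt_card_verts v
            rw [Fintype.card_fin] at this
            exact Nat.pow_le_pow_left (by omega) 2
        _ = p * (m + p - 1) ^ 2 := by rw [hScard]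
      
    have hBsum : (∑ v ∈ Sᶜ, G.degree v ^ 2) = ∑ x : ↥((↑S : Set (Fin (m + p)))ᶜ), G.degree ↑x ^ 2 := by
      rw [Finset.sum_set_coe (f := fun v => G.degree v ^ 2)]
      congr 1
      ext v
      simp
    have hB : (∑ x : ↥((↑S : Set (Fin (m + p)))ᶜ), G.degree ↑x ^ 2)
        ≤ ∑ x : ↥((↑S : Set (Fin (m + p)))ᶜ), ((deleteS G S).degree x + p) ^ 2 := by
      apply Finset.sum_le_sum
      intro x _
      apply Nat.pow_le_pow_left
      have h := degree_le_del G S x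
      rw [hScard] at h
      exact h
    -- now cast everything to ℤ
    have hBZ : ((∑ x : ↥((↑S : Set (Fin (m + p)))ᶜ), ((deleteS G S).degree x + p) ^ 2 : ℕ) : ℤ)
        = (M1 (deleteS G S) : ℤ) + 2 * p * (2 * ((m : ℤ) + k) - 2) + (m : ℤ) * p ^ 2 := by
      push_cast [M1]
      rw [← hD']
      have expand : ∀ x : ↥((↑S : Set (Fin (m + p)))ᶜ),
          (((deleteS G S).degree x : ℤ) + p) ^ 2 = ((deleteS G S).degree x : ℤ) ^ 2 + 2 * p * ((deleteS G S).degree x : ℤ) + p ^ 2 :=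
        fun x => by ring
      rw [Finset.sum_congr rfl fun x _ => expand x, Finset.sum_add_distrib,
        Finset.sum_add_distrib, ← Finset.mul_sum, Finset.sum_const, Finset.card_univ, hcardc,
        nsmul_eq_mul]
    have hmp1 : ((m + p - 1 : ℕ) : ℤ) = (m : ℤ) + p - 1 := by omega
    have hfinal : (M1 G : ℤ) ≤ (p : ℤ) * ((m : ℤ) + p - 1) ^ 2 + (M1 H : ℤ)
        + 2 * p * (2 * ((m : ℤ) + k) - 2) + (m : ℤ) * p ^ 2 := by
      have hAZ : ((∑ v ∈ S, G.degree v ^ 2 : ℕ) : ℤ) ≤ (p : ℤ) * ((m : ℤ) + p - 1) ^ 2 := by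
        calc ((∑ v ∈ S, G.degree v ^ 2 : ℕ) : ℤ) ≤ ((p * (m + p - 1) ^ 2 : ℕ) : ℤ) := by
              exact_mod_cast hA
          _ = (p : ℤ) * ((m : ℤ) + p - 1) ^ 2 := by push_cast [hmp1]; ring
      have hBZ2 : ((∑ v ∈ Sᶜ, G.degree v ^ 2 : ℕ) : ℤ)
          ≤ (M1 (deleteS G S) : ℤ) + 2 * p * (2 * ((m : ℤ) + k) - 2) + (m : ℤ) * p ^ 2 := by
        rw [← hBZ]
        have hBn : (∑ v ∈ Sᶜ, G.degree v ^ 2) ≤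
            ∑ x : ↥((↑S : Set (Fin (m + p)))ᶜ), ((deleteS G S).degree x + p) ^ 2 :=
          hBsum ▸ hB
        exact_mod_cast hBn
      have hMle : (M1 (deleteS G S) : ℤ) ≤ (M1 H : ℤ) := by exact_mod_cast hM1le
      have := hsplit
      have hcast : (M1 G : ℤ) = ((∑ v ∈ S, G.degree v ^ 2 : ℕ) : ℤ)
          + ((∑ v ∈ Sᶜ, G.degree v ^ 2 : ℕ) : ℤ) := by exact_mod_cast congrArg (Nat.cast : ℕ → ℤ) this
      linarith
    have hring : (p : ℤ) * ((m : ℤ) + p - 1) ^ 2 + (M1 H : ℤ)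
        + 2 * p * (2 * ((m : ℤ) + k) - 2) + (m : ℤ) * p ^ 2
        = (M1 H : ℤ) + p * (4 * k + ((m + p : ℕ) : ℤ) ^ 2 + 2 * ((m + p : ℕ) : ℤ)
          + p * (((m + p : ℕ) : ℤ) - 4) - (p : ℤ) ^ 2 - 3) := by
      push_cast
      ring
    linarith [hring ▸ hfinal]
  · -- equality for the join
    set J := joinG H (SimpleGraph.completeGraph (Fin p)) with hJ
    have hdl : ∀ a : Fin m, J.degree (Sum.inl a) = H.degree a + p := by
      intro a
      rw [← SimpleGraph.card_neighborFinset_eq_degree]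
      have hns : J.neighborFinset (Sum.inl a) = (H.neighborFinset a).disjSum Finset.univ := by
        ext x
        cases x with
        | inl b =>
          simp only [SimpleGraph.mem_neighborFinset, Finset.inl_mem_disjSum]
          exact Iff.rfl
        | inr b =>
          simp only [SimpleGraph.mem_neighborFinset, Finset.inr_mem_disjSum, Finset.mem_univ,
            iff_true]
          exact trivial
      rw [hns, Finset.card_disjSum, SimpleGraph.card_neighborFinset_eq_degree, Finset.card_univ,
        Fintype.card_fin]
    have hdr : ∀ b : Fin p, J.degree (Sum.inr b) + 1 = m + p := by
      intro b
      rw [← SimpleGraph.card_neighborFinset_eq_degree]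
      have hns : J.neighborFinset (Sum.inr b) = Finset.univ.disjSum ({b}ᶜ) := by
        ext x
        cases x with
        | inl a =>
          simp only [SimpleGraph.mem_neighborFinset, Finset.inl_mem_disjSum, Finset.mem_univ,
            iff_true]
          exact trivial
        | inr c =>
          simp only [SimpleGraph.mem_neighborFinset, Finset.inr_mem_disjSum, Finset.mem_compl,
            Finset.mem_singleton]
          constructor
          · intro h
            exact fun hc => (h : b ≠ c) hc.symm
          · intro h
            exact fun hc => h hc.symm
      rw [hns, Finset.card_disjSum, Finset.card_univ, Fintype.card_fin, Finset.card_compl,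
        Finset.card_singleton, Fintype.card_fin]
      have : 1 ≤ p := b.pos
      omega
    have hM1J : (M1 J : ℤ) = (∑ a : Fin m, ((H.degree a : ℤ) + p) ^ 2)
        + p * ((m : ℤ) + p - 1) ^ 2 := by
      rw [M1]
      push_cast
      rw [Fintype.sum_sum_type]
      congr 1
      · exact Finset.sum_congr rfl fun a _ => by rw [hdl a]; push_cast; ring
      · have : ∀ b : Fin p, ((J.degree (Sum.inr b) : ℤ)) ^ 2 = ((m : ℤ) + p - 1) ^ 2 := by
          intro b
          have := hdr b
          have hc : (J.degree (Sum.inr b) : ℤ) + 1 = (m : ℤ) + p := by exact_mod_cast this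
          rw [show (J.degree (Sum.inr b) : ℤ) = (m : ℤ) + p - 1 by linarith]
        rw [Finset.sum_congr rfl fun b _ => this b, Finset.sum_const, Finset.card_univ,
          Fintype.card_fin, nsmul_eq_mul]
    have hexp : (∑ a : Fin m, ((H.degree a : ℤ) + p) ^ 2)
        = (M1 H : ℤ) + 2 * p * (2 * ((m : ℤ) + k) - 2) + (m : ℤ) * p ^ 2 := by
      have expand : ∀ a : Fin m,
          ((H.degree a : ℤ) + p) ^ 2 = (H.degree a : ℤ) ^ 2 + 2 * p * (H.degree a : ℤ) + p ^ 2 :=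
        fun a => by ring
      rw [Finset.sum_congr rfl fun a _ => expand a, Finset.sum_add_distrib,
        Finset.sum_add_distrib, ← Finset.mul_sum, hDH, Finset.sum_const, Finset.card_univ,
        Fintype.card_fin, nsmul_eq_mul]
      push_cast [M1]
      ring
    rw [hM1J, hexp]
    push_cast
    ring
end

section
/- For n ≥ p + 2, the graph S_{n−p} + K_p (the join of the star on n−p vertices with the complete graph K_p) has the maximum first Zagreb index M_1 among all p-quasi trees on n vertices, i.e., among all connected graphs G on n vertices such that there exists S ⊆ V(G) with |S| = p and G − S a tree, and no smaller set whose removal leaves a tree. -/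
open scoped Classical
lemma fincard_irrel {α : Type*} (i1 i2 : Fintype α) :
    @Fintype.card α i1 = @Fintype.card α i2 := by
  cases Subsingleton.elim i1 i2; rfl

lemma edgecard_irrel {V : Type*} {G : SimpleGraph V} (i1 i2 : Fintype G.edgeSet) :
    (@SimpleGraph.edgeFinset V G i1).card = (@SimpleGraph.edgeFinset V G i2).card := by
  cases Subsingleton.elim i1 i2; rfl

lemma conn_card_le {V : Type*} [Fintype V] (G : SimpleGraph V) (hc : G.Connected) :
    Fintype.card V ≤ G.edgeFinset.card + 1 := by
  classical
  obtain ⟨root⟩ := hc.nonempty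
  have hex : ∀ v : V, ∃ u, v ≠ root → (G.Adj v u ∧ G.dist u root < G.dist v root) := by
    intro v
    by_cases hv : v = root
    · exact ⟨v, fun h => absurd hv h⟩
    obtain ⟨p, hp⟩ := (hc v root).exists_walk_length_eq_dist
    cases p with
    | nil => exact absurd rfl hv
    | cons h q =>
      refine ⟨_, fun _ => ⟨h, ?_⟩⟩
      have h1 : G.dist _ root ≤ q.length := SimpleGraph.dist_le q
      have h2 : q.length + 1 = G.dist v root := by
        simpa [SimpleGraph.Walk.length_cons] using hp
      omega
  choose f hf using hex
  have hcard : (Finset.univ.erase root).card ≤ G.edgeFinset.card := by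
    apply Finset.card_le_card_of_injOn (fun v => s(v, f v))
    · intro v hv
      rw [Finset.mem_coe, Finset.mem_erase] at hv
      rw [Finset.mem_coe, SimpleGraph.mem_edgeFinset, SimpleGraph.mem_edgeSet]
      exact (hf v hv.1).1
    · intro v hv w hw h
      rw [Finset.mem_coe, Finset.mem_erase] at hv hw
      simp only [Sym2.eq_iff] at h
      rcases h with ⟨rfl, _⟩ | ⟨h1, h2⟩
      · rfl
      · exfalso
        have hv' := (hf v hv.1).2
        have hw' := (hf w hw.1).2
        rw [h2] at hv'
        rw [← h1] at hw'
        omega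
  rw [Finset.card_erase_of_mem (Finset.mem_univ root), Finset.card_univ] at hcard
  omega

lemma tree_triangle_free {V : Type*} [Fintype V] (G : SimpleGraph V) (hc : G.Connected)
    (hm : G.edgeFinset.card + 1 = Fintype.card V) :
    ∀ u v w : V, G.Adj u v → G.Adj v w → G.Adj u w → False := by
  classical
  intro u v w huv hvw huw
  set G' := G \ SimpleGraph.fromEdgeSet {s(u, w)} with hG'
  have hadj : ∀ x y : V, G.Adj x y → s(x, y) ≠ s(u, w) → G'.Adj x y := by
    intro x y h hne
    simp only [hG', SimpleGraph.sdiff_adj, SimpleGraph.fromEdgeSet_adj]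
    exact ⟨h, fun hh => hne hh.1⟩
  have huv' : G'.Adj u v := by
    apply hadj _ _ huv
    intro hh
    rw [Sym2.eq_iff] at hh
    rcases hh with ⟨h1, h2⟩ | ⟨h1, h2⟩
    · exact hvw.ne h2
    · exact huw.ne h1
  have hvw' : G'.Adj v w := by
    apply hadj _ _ hvw
    intro hh
    rw [Sym2.eq_iff] at hh
    rcases hh with ⟨h1, h2⟩ | ⟨h1, h2⟩
    · exact huv.ne h1.symm
    · exact hvw.ne h1
  have hlift : ∀ x y : V, G.Adj x y → G'.Reachable x y := by
    intro x y h
    by_cases hne : s(x, y) = s(u, w)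
    · rw [Sym2.eq_iff] at hne
      rcases hne with ⟨rfl, rfl⟩ | ⟨rfl, rfl⟩
      · exact huv'.reachable.trans hvw'.reachable
      · exact (huv'.reachable.trans hvw'.reachable).symm
    · exact (hadj x y h hne).reachable
  have hc' : G'.Connected := by
    rw [SimpleGraph.connected_iff]
    refine ⟨?_, hc.nonempty⟩
    intro a b
    obtain ⟨p⟩ := hc a b
    induction p with
    | nil => exact SimpleGraph.Reachable.refl _
    | cons h q ih => exact (hlift _ _ h).trans ih
  have hedge : G'.edgeFinset = G.edgeFinset.erase s(u, w) := by
    ext e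
    simp only [SimpleGraph.mem_edgeFinset, Finset.mem_erase, hG', SimpleGraph.edgeSet_sdiff,
      SimpleGraph.edgeSet_fromEdgeSet, SimpleGraph.edgeSet_sdiff_sdiff_isDiag, Set.mem_diff,
      Set.mem_singleton_iff]
    tauto
  have hcard := conn_card_le G' hc'
  have hcard2 : Fintype.card V ≤ (G.edgeFinset.erase s(u, w)).card + 1 := by
    rw [← hedge]
    convert hcard using 3
    congr!
  rw [Finset.card_erase_of_mem (by rw [SimpleGraph.mem_edgeFinset]; exact huw)] at hcard2
  have hpos : 0 < G.edgeFinset.card := Finset.card_pos.2 ⟨s(u, w), by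
    rw [SimpleGraph.mem_edgeFinset]; exact huw⟩
  omega

set_option maxHeartbeats 1000000 in
lemma sum_deg_sq_le {V : Type*} [Fintype V] [DecidableEq V] (G : SimpleGraph V)
    [DecidableRel G.Adj]
    (htf : ∀ u v w : V, G.Adj u v → G.Adj v w → G.Adj u w → False) :
    ∑ v, G.degree v ^ 2 ≤ Fintype.card V * G.edgeFinset.card := by
  have hnb : ∀ v : V, G.neighborFinset v = Finset.univ.filter (fun u => G.Adj v u) := by
    intro v; ext u; simp
  have key : ∑ v, G.degree v ^ 2 = ∑ v, ∑ u ∈ G.neighborFinset v, G.degree u := by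
    calc ∑ v, G.degree v ^ 2 = ∑ u, G.degree u * G.degree u := by
          simp [pow_two]
      _ = ∑ u, ∑ v ∈ Finset.univ.filter (fun v => G.Adj v u), G.degree u := by
          apply Finset.sum_congr rfl
          intro u _
          rw [Finset.sum_const, smul_eq_mul]
          congr 1
          rw [← SimpleGraph.card_neighborFinset_eq_degree u (G := G), hnb]
          congr 1
          ext v; simp [SimpleGraph.adj_comm]
      _ = ∑ u, ∑ v, if G.Adj v u then G.degree u else 0 := by
          apply Finset.sum_congr rfl; intro u _; rw [Finset.sum_filter]
      _ = ∑ v, ∑ u, if G.Adj v u then G.degree u else 0 := Finset.sum_comm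
      _ = ∑ v, ∑ u ∈ G.neighborFinset v, G.degree u := by
          apply Finset.sum_congr rfl; intro v _; rw [hnb, Finset.sum_filter]
  have hbound : ∀ v : V, ∑ u ∈ G.neighborFinset v, G.degree u ≤ G.edgeFinset.card := by
    intro v
    have hdisj : ∀ u1 ∈ G.neighborFinset v, ∀ u2 ∈ G.neighborFinset v, u1 ≠ u2 →
        Disjoint (G.incidenceFinset u1) (G.incidenceFinset u2) := by
      intro u1 h1 u2 h2 hne
      rw [SimpleGraph.mem_neighborFinset] at h1 h2
      rw [Finset.disjoint_left]
      intro e he1 he2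
      rw [SimpleGraph.mem_incidenceFinset] at he1 he2
      obtain ⟨heE, hm1⟩ := he1
      obtain ⟨-, hm2⟩ := he2
      have : e = s(u1, u2) := ((Sym2.mem_and_mem_iff hne).1 ⟨hm1, hm2⟩)
      rw [this, SimpleGraph.mem_edgeSet] at heE
      exact htf v u1 u2 h1 heE h2
    have h1 : ∑ u ∈ G.neighborFinset v, G.degree u
        = ∑ u ∈ G.neighborFinset v, (G.incidenceFinset u).card := by
      simp [SimpleGraph.card_incidenceFinset_eq_degree]
    rw [h1, ← Finset.card_biUnion hdisj]
    apply Finset.card_le_card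
    intro e he
    rw [Finset.mem_biUnion] at he
    obtain ⟨u, -, he⟩ := he
    rw [SimpleGraph.mem_incidenceFinset] at he
    rw [SimpleGraph.mem_edgeFinset]
    exact he.1
  calc ∑ v, G.degree v ^ 2 = ∑ v, ∑ u ∈ G.neighborFinset v, G.degree u := key
    _ ≤ ∑ _v : V, G.edgeFinset.card := Finset.sum_le_sum (fun v _ => hbound v)
    _ = Fintype.card V * G.edgeFinset.card := by
        rw [Finset.sum_const, smul_eq_mul, Finset.card_univ]

-- degree bound outside S
lemma degree_le_induce_add {V : Type*} [Fintype V] (G : SimpleGraph V) (S : Finset V)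
    (v : V) (hv : v ∈ ((↑S : Set V)ᶜ)) :
    G.degree v ≤ (deleteS G S).degree ⟨v, hv⟩ + S.card := by
  -- classical
  have hsplit := Finset.card_filter_add_card_filter_not
    (s := G.neighborFinset v) (p := fun u => u ∈ S)
  have h1 : ((G.neighborFinset v).filter (fun u => u ∈ S)).card ≤ S.card := by
    apply Finset.card_le_card
    intro u hu
    exact (Finset.mem_filter.1 hu).2
  have h2 : ((G.neighborFinset v).filter (fun u => u ∉ S)).card
      ≤ (deleteS G S).degree ⟨v, hv⟩ := by
    rw [← SimpleGraph.card_neighborFinset_eq_degree]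
    have himg : ((G.neighborFinset v).filter (fun u => u ∉ S))
        ⊆ ((deleteS G S).neighborFinset ⟨v, hv⟩).image Subtype.val := by
      intro u hu
      rw [Finset.mem_filter, SimpleGraph.mem_neighborFinset] at hu
      rw [Finset.mem_image]
      refine ⟨⟨u, by simpa using hu.2⟩, ?_, rfl⟩
      rw [SimpleGraph.mem_neighborFinset]
      exact hu.1
    calc ((G.neighborFinset v).filter (fun u => u ∉ S)).card
        ≤ (((deleteS G S).neighborFinset ⟨v, hv⟩).image Subtype.val).card :=
          Finset.card_le_card himg
      _ ≤ ((deleteS G S).neighborFinset ⟨v, hv⟩).card := Finset.card_image_le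
  have hdeg : G.degree v = (G.neighborFinset v).card :=
    (SimpleGraph.card_neighborFinset_eq_degree v (G := G)).symm
  omega

set_option maxHeartbeats 2000000 in
theorem stmt11 {n p : ℕ} (hn : p + 2 ≤ n) (G : SimpleGraph (Fin n))
    (hG : QuasiKCyclic 0 p G) :
    M1 G ≤ M1 (joinG (starGraph (n - p)) (SimpleGraph.completeGraph (Fin p))) := by
  -- classical
  obtain ⟨m, rfl⟩ : ∃ m, n = p + 2 + m := ⟨n - (p + 2), by omega⟩
  obtain ⟨hconn, ⟨S, hScard, hTconn, hTcard⟩, -⟩ := hG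
  set T := deleteS G S with hT
  -- card of complement
  have hWcard : Fintype.card ↥((↑S : Set (Fin (p + 2 + m)))ᶜ) = m + 2 := by
    rw [Fintype.card_compl_set]
    simp [hScard, Fintype.card_fin]
    omega
  have hTcard2 : T.edgeFinset.card + 1 = m + 2 := by
    rw [Nat.add_zero] at hTcard
    rw [edgecard_irrel (i2 := inferInstance) _, fincard_irrel (i2 := inferInstance) _] at hTcard
    rw [hTcard]
    exact hWcard
  have hTedge : T.edgeFinset.card = m + 1 := by omega
  -- triangle-free
  have htf : ∀ u v w, T.Adj u v → T.Adj v w → T.Adj u w → False :=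
    tree_triangle_free T hTconn (by rw [hTedge, hWcard])
  -- sum of degrees in T
  have hsumdeg : ∑ w, T.degree w = 2 * (m + 1) := by
    rw [SimpleGraph.sum_degrees_eq_twice_card_edges, hTedge]
  have hsumsq : ∑ w, T.degree w ^ 2 ≤ (m + 2) * (m + 1) := by
    have h := sum_deg_sq_le T htf
    rwa [hWcard, hTedge] at h
  -- split M1 G
  have hfilterS : Finset.univ.filter (fun v : Fin (p + 2 + m) => v ∈ S) = S := by
    ext v; simp
  have hsplit : M1 G = (∑ v ∈ Finset.univ.filter (fun v => v ∈ S), G.degree v ^ 2)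
      + (∑ v ∈ Finset.univ.filter (fun v => v ∉ S), G.degree v ^ 2) :=
    (Finset.sum_filter_add_sum_filter_not _ _ _).symm
  have hS1 : ∑ v ∈ Finset.univ.filter (fun v => v ∈ S), G.degree v ^ 2
      ≤ p * (p + m + 1) ^ 2 := by
    refine le_trans (Finset.sum_le_card_nsmul _ _ ((p + m + 1) ^ 2) ?_) ?_
    · intro v _
      have hlt : G.degree v < p + 2 + m := by
        have := G.degree_lt_card_verts v
        rwa [Fintype.card_fin] at this
      exact Nat.pow_le_pow_left (by omega) 2
    · rw [hfilterS, hScard, smul_eq_mul]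
  have hS2 : ∑ v ∈ Finset.univ.filter (fun v => v ∉ S), G.degree v ^ 2
      ≤ ∑ w : ↥((↑S : Set (Fin (p + 2 + m)))ᶜ), (T.degree w + p) ^ 2 := by
    have htrans : ∑ v ∈ Finset.univ.filter (fun v => v ∉ S), G.degree v ^ 2
        = ∑ w : ↥((↑S : Set (Fin (p + 2 + m)))ᶜ), G.degree w.1 ^ 2 := by
      apply Finset.sum_subtype
      intro x; simp
    rw [htrans]
    apply Finset.sum_le_sum
    intro w _
    refine Nat.pow_le_pow_left ?_ 2
    -- G.degree w.1 ≤ T.degree w + p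
    have hsplit2 := Finset.card_filter_add_card_filter_not
      (s := G.neighborFinset w.1) (p := fun u => u ∈ S)
    have h1 : ((G.neighborFinset w.1).filter (fun u => u ∈ S)).card ≤ p :=
      le_trans (Finset.card_le_card (fun u hu => (Finset.mem_filter.1 hu).2))
        (le_of_eq hScard)
    have h2 : ((G.neighborFinset w.1).filter (fun u => u ∉ S)).card ≤ T.degree w := by
      rw [← SimpleGraph.card_neighborFinset_eq_degree]
      have himg : ((G.neighborFinset w.1).filter (fun u => u ∉ S))
          ⊆ (T.neighborFinset w).image Subtype.val := by
        intro u hu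
        rw [Finset.mem_filter, SimpleGraph.mem_neighborFinset] at hu
        rw [Finset.mem_image]
        refine ⟨⟨u, by simpa using hu.2⟩, ?_, rfl⟩
        rw [SimpleGraph.mem_neighborFinset]
        obtain ⟨w1, hw1⟩ := w
        exact hu.1
      calc ((G.neighborFinset w.1).filter (fun u => u ∉ S)).card
          ≤ ((T.neighborFinset w).image Subtype.val).card := Finset.card_le_card himg
        _ ≤ (T.neighborFinset w).card := Finset.card_image_le
    have hdeg : G.degree w.1 = (G.neighborFinset w.1).card :=
      (SimpleGraph.card_neighborFinset_eq_degree w.1 (G := G)).symm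
    omega
  have hexp : ∑ w : ↥((↑S : Set (Fin (p + 2 + m)))ᶜ), (T.degree w + p) ^ 2
      ≤ (m + 2) * (m + 1) + 2 * p * (2 * (m + 1)) + (m + 2) * p ^ 2 := by
    have h1 : ∑ w : ↥((↑S : Set (Fin (p + 2 + m)))ᶜ), (T.degree w + p) ^ 2
        = (∑ w, T.degree w ^ 2) + 2 * p * (∑ w, T.degree w)
          + Fintype.card ↥((↑S : Set (Fin (p + 2 + m)))ᶜ) * p ^ 2 := by
      calc ∑ w : ↥((↑S : Set (Fin (p + 2 + m)))ᶜ), (T.degree w + p) ^ 2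
          = ∑ w : ↥((↑S : Set (Fin (p + 2 + m)))ᶜ),
              (T.degree w ^ 2 + (2 * p * T.degree w + p ^ 2)) :=
            Finset.sum_congr rfl (fun w _ => by ring)
        _ = (∑ w, T.degree w ^ 2) + ((∑ w, 2 * p * T.degree w)
              + ∑ _w : ↥((↑S : Set (Fin (p + 2 + m)))ᶜ), p ^ 2) := by
            rw [Finset.sum_add_distrib, Finset.sum_add_distrib]
        _ = (∑ w, T.degree w ^ 2) + 2 * p * (∑ w, T.degree w)
              + Fintype.card ↥((↑S : Set (Fin (p + 2 + m)))ᶜ) * p ^ 2 := by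
            rw [← Finset.mul_sum, Finset.sum_const, Finset.card_univ, smul_eq_mul]
            ring
    rw [h1, hsumdeg, hWcard]
    have := hsumsq
    omega
  -- RHS
  have key : ∀ t : ℕ, t = m + 2 → (m + 1 + p) ^ 2 + (m + 1) * (p + 1) ^ 2
      + p * (p + m + 1) ^ 2 ≤ M1 (joinG (starGraph t) (SimpleGraph.completeGraph (Fin p))) := by
    rintro t rfl
    set J := joinG (starGraph (m + 2)) (SimpleGraph.completeGraph (Fin p)) with hJ
    have hdeg_inr : ∀ b : Fin p, p + m + 1 ≤ J.degree (Sum.inr b) := by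
      intro b
      rw [← SimpleGraph.card_neighborFinset_eq_degree]
      have hsub : Finset.univ.erase (Sum.inr b) ⊆ J.neighborFinset (Sum.inr b) := by
        intro x hx
        rw [Finset.mem_erase] at hx
        rw [SimpleGraph.mem_neighborFinset]
        match x, hx with
        | Sum.inl a, _ => exact trivial
        | Sum.inr b', hx =>
          have : b' ≠ b := fun h => hx.1 (by rw [h])
          exact this.symm
      have hcard : ((Finset.univ.erase (Sum.inr b)) : Finset (Fin (m + 2) ⊕ Fin p)).card
          = (m + 2) + p - 1 := by
        rw [Finset.card_erase_of_mem (Finset.mem_univ _), Finset.card_univ,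
          Fintype.card_sum, Fintype.card_fin, Fintype.card_fin]
      have := Finset.card_le_card hsub
      omega
    have hdeg_inl0 : ∀ a : Fin (m + 2), a.val = 0 → m + 1 + p ≤ J.degree (Sum.inl a) := by
      intro a ha
      rw [← SimpleGraph.card_neighborFinset_eq_degree]
      have hsub : Finset.univ.erase (Sum.inl a) ⊆ J.neighborFinset (Sum.inl a) := by
        intro x hx
        rw [Finset.mem_erase] at hx
        rw [SimpleGraph.mem_neighborFinset]
        match x, hx with
        | Sum.inr b, _ => exact trivial
        | Sum.inl a', hx =>
          refine ⟨fun h => hx.1 (by rw [h]), Or.inl ha⟩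
      have hcard : ((Finset.univ.erase (Sum.inl a)) : Finset (Fin (m + 2) ⊕ Fin p)).card
          = (m + 2) + p - 1 := by
        rw [Finset.card_erase_of_mem (Finset.mem_univ _), Finset.card_univ,
          Fintype.card_sum, Fintype.card_fin, Fintype.card_fin]
      have := Finset.card_le_card hsub
      omega
    have hdeg_inl1 : ∀ a : Fin (m + 2), a.val ≠ 0 → p + 1 ≤ J.degree (Sum.inl a) := by
      intro a ha
      rw [← SimpleGraph.card_neighborFinset_eq_degree]
      have hsub : insert (Sum.inl (⟨0, by omega⟩ : Fin (m + 2)))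
          (Finset.univ.image (Sum.inr : Fin p → Fin (m + 2) ⊕ Fin p))
          ⊆ J.neighborFinset (Sum.inl a) := by
        intro x hx
        rw [Finset.mem_insert] at hx
        rw [SimpleGraph.mem_neighborFinset]
        rcases hx with rfl | hx
        · refine ⟨fun h => ha (by rw [h]), Or.inr rfl⟩
        · obtain ⟨c, -, rfl⟩ := Finset.mem_image.1 hx
          exact trivial
      have hcard : (insert (Sum.inl (⟨0, by omega⟩ : Fin (m + 2)))
          (Finset.univ.image (Sum.inr : Fin p → Fin (m + 2) ⊕ Fin p))).card = p + 1 := by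
        rw [Finset.card_insert_of_notMem (by simp),
          Finset.card_image_of_injective _ Sum.inr_injective, Finset.card_univ, Fintype.card_fin]
      have := Finset.card_le_card hsub
      omega
    have hM1J : (m + 1 + p) ^ 2 + (m + 1) * (p + 1) ^ 2 + p * (p + m + 1) ^ 2 ≤ M1 J := by
      have hM1 : M1 J = (∑ a : Fin (m + 2), J.degree (Sum.inl a) ^ 2)
          + ∑ b : Fin p, J.degree (Sum.inr b) ^ 2 := by
        rw [M1, Fintype.sum_sum_type]
      rw [hM1]
      have hpart1 : (m + 1 + p) ^ 2 + (m + 1) * (p + 1) ^ 2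
          ≤ ∑ a : Fin (m + 2), J.degree (Sum.inl a) ^ 2 := by
        rw [Fin.sum_univ_succ]
        apply add_le_add
        · exact Nat.pow_le_pow_left (hdeg_inl0 0 rfl) 2
        · calc (m + 1) * (p + 1) ^ 2
              = (Finset.univ : Finset (Fin (m + 1))).card • ((p + 1) ^ 2) := by
                rw [Finset.card_univ, Fintype.card_fin, smul_eq_mul]
            _ ≤ ∑ i : Fin (m + 1), J.degree (Sum.inl i.succ) ^ 2 := by
                apply Finset.card_nsmul_le_sum
                intro i _
                refine Nat.pow_le_pow_left (hdeg_inl1 i.succ ?_) 2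
                simp [Fin.val_succ]
      have hpart2 : p * (p + m + 1) ^ 2 ≤ ∑ b : Fin p, J.degree (Sum.inr b) ^ 2 := by
        calc p * (p + m + 1) ^ 2
            = (Finset.univ : Finset (Fin p)).card • ((p + m + 1) ^ 2) := by
              rw [Finset.card_univ, Fintype.card_fin, smul_eq_mul]
          _ ≤ ∑ b : Fin p, J.degree (Sum.inr b) ^ 2 := by
              apply Finset.card_nsmul_le_sum
              intro b _
              exact Nat.pow_le_pow_left (hdeg_inr b) 2
      exact add_le_add hpart1 hpart2
    exact hM1J
  calc M1 G = (∑ v ∈ Finset.univ.filter (fun v => v ∈ S), G.degree v ^ 2)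
        + (∑ v ∈ Finset.univ.filter (fun v => v ∉ S), G.degree v ^ 2) := hsplit
    _ ≤ p * (p + m + 1) ^ 2
        + ((m + 2) * (m + 1) + 2 * p * (2 * (m + 1)) + (m + 2) * p ^ 2) :=
          add_le_add hS1 (le_trans hS2 hexp)
    _ = (m + 1 + p) ^ 2 + (m + 1) * (p + 1) ^ 2 + p * (p + m + 1) ^ 2 := by ring
    _ ≤ M1 (joinG (starGraph (p + 2 + m - p)) (SimpleGraph.completeGraph (Fin p))) :=
          key _ (by omega)
end
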